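/- Let A be an m×n matrix over ℝ≥0, b ∈ ℝ≥0^m, and let X ⊆ ℝ≥0^n be an interval, X = {x : x_j ∈ X_j for all j} with each X_j ⊆ ℝ≥0 nonempty and order-convex. Then there exists x ∈ X with A⊗x = b if and only if both of the following hold: (a) for every j there exists s ∈ X_j with (s : [0,∞]) ≤ γ*_j(A,b) (that is, γ*_j(A,b) lies in the upward closure X_j↑ of X_j in [0,∞]); and (b) for every i with b_i ≠ 0 there exists j such that i ∈ M_j(A,b) and γ*_j(A,b) = (t : [0,∞]) for some t ∈ X_j. -/

import Mathlib

open scoped NNReal ENNReal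

noncomputable section

namespace MaxAlg

/-- Max-algebraic matrix–vector product over ℝ≥0: (A⊗x)_i = max_j a_{ij}·x_j. -/
def mulVec {m n : ℕ} (A : Matrix (Fin m) (Fin n) ℝ≥0) (x : Fin n → ℝ≥0) :
    Fin m → ℝ≥0 :=
  fun i => Finset.univ.sup fun j => A i j * x j

/-- Support of a vector. -/
def supp {m : ℕ} (x : Fin m → ℝ≥0) : Set (Fin m) := {i | x i ≠ 0}

/-- Eigencone V(A,λ) = {x : A⊗x = λ·x}. -/
def eigencone {n : ℕ} (A : Matrix (Fin n) (Fin n) ℝ≥0) (lam : ℝ≥0) :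
    Set (Fin n → ℝ≥0) :=
  {x | mulVec A x = fun i => lam * x i}

/-- A cycle of length `k ≥ 1` is encoded as `σ : ℕ → Fin n` with `σ k = σ 0`
(standing for a function on ℤ/kℤ). -/
def IsCycle {n : ℕ} (k : ℕ) (σ : ℕ → Fin n) : Prop := 1 ≤ k ∧ σ k = σ 0

/-- The cycle lies in a set S: all its values belong to S. -/
def LiesIn {n : ℕ} (k : ℕ) (σ : ℕ → Fin n) (S : Set (Fin n)) : Prop :=
  ∀ t < k, σ t ∈ S

/-- Weight of a cycle in A: ∏_t a_{σ(t),σ(t+1)}. -/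
def cycleWeight {n : ℕ} (A : Matrix (Fin n) (Fin n) ℝ≥0) (k : ℕ) (σ : ℕ → Fin n) : ℝ≥0 :=
  ∏ t ∈ Finset.range k, A (σ t) (σ (t + 1))

/-- γ*_j(A,b): the greatest α ∈ [0,∞] with α·a_{ij} ≤ b_i for all i
(conventions 0·∞ = ∞·0 = 0 are built into ℝ≥0∞ multiplication). -/
def gammaStar {m n : ℕ} (A : Matrix (Fin m) (Fin n) ℝ≥0) (b : Fin m → ℝ≥0) (j : Fin n) :
    ℝ≥0∞ :=
  sSup {α : ℝ≥0∞ | ∀ i, α * (A i j : ℝ≥0∞) ≤ (b i : ℝ≥0∞)}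

/-- M_j(A,b) = {i : a_{ij}·γ*_j(A,b) = b_i ≠ 0}. -/
def Mset {m n : ℕ} (A : Matrix (Fin m) (Fin n) ℝ≥0) (b : Fin m → ℝ≥0) (j : Fin n) :
    Set (Fin m) :=
  {i | (A i j : ℝ≥0∞) * gammaStar A b j = (b i : ℝ≥0∞) ∧ b i ≠ 0}

/-- Max-algebraic column span of A. -/
def span {m n : ℕ} (A : Matrix (Fin m) (Fin n) ℝ≥0) : Set (Fin m → ℝ≥0) :=
  {y | ∃ c : Fin n → ℝ≥0, ∀ r, y r = Finset.univ.sup fun j => A r j * c j}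

/-- Max-algebraic column span of A with its i-th column removed. -/
def spanMinus {m n : ℕ} (A : Matrix (Fin m) (Fin n) ℝ≥0) (i : Fin n) :
    Set (Fin m → ℝ≥0) :=
  {y | ∃ c : Fin n → ℝ≥0, ∀ r, y r = (Finset.univ.erase i).sup fun j => A r j * c j}

/-- N^λ(A) = {i : ∃ x ∈ V(A,λ), x_i > 0}. -/
def Nlam {n : ℕ} (A : Matrix (Fin n) (Fin n) ℝ≥0) (lam : ℝ≥0) : Set (Fin n) :=
  {i | ∃ x ∈ eigencone A lam, 0 < x i}

/-- (i,j) is an edge of crit(A,λ). -/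
def CritEdge {n : ℕ} (A : Matrix (Fin n) (Fin n) ℝ≥0) (lam : ℝ≥0) (i j : Fin n) : Prop :=
  ∃ k σ, IsCycle k σ ∧ LiesIn k σ (Nlam A lam) ∧ cycleWeight A k σ = lam ^ k ∧
    ∃ t < k, σ t = i ∧ σ (t + 1) = j

/-- i is a critical node: some cycle lying in N^λ(A) with weight λ^k passes through i. -/
def CritNode {n : ℕ} (A : Matrix (Fin n) (Fin n) ℝ≥0) (lam : ℝ≥0) (i : Fin n) : Prop :=
  ∃ k σ, IsCycle k σ ∧ LiesIn k σ (Nlam A lam) ∧ cycleWeight A k σ = lam ^ k ∧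
    ∃ t < k, σ t = i

/-- (i,j) is an edge of crit(A,x,λ). -/
def CritEdgeOn {n : ℕ} (A : Matrix (Fin n) (Fin n) ℝ≥0) (lam : ℝ≥0) (x : Fin n → ℝ≥0)
    (i j : Fin n) : Prop :=
  ∃ k σ, IsCycle k σ ∧ LiesIn k σ (supp x) ∧ cycleWeight A k σ = lam ^ k ∧
    ∃ t < k, σ t = i ∧ σ (t + 1) = j

/-- x is a simple image eigenvector of A associated with λ. -/
def SimpleImageEig {n : ℕ} (A : Matrix (Fin n) (Fin n) ℝ≥0) (lam : ℝ≥0)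
    (x : Fin n → ℝ≥0) : Prop :=
  x ∈ eigencone A lam ∧
    ∀ y : Fin n → ℝ≥0, mulVec A y = (fun i => lam * x i) → y = x

/-- The box (interval) determined by component intervals X_j. -/
def box {n : ℕ} (X : Fin n → Set ℝ≥0) : Set (Fin n → ℝ≥0) := {x | ∀ j, x j ∈ X j}

/-- Each component set is a nonempty order-convex interval of ℝ≥0. -/
def IsInterval {n : ℕ} (X : Fin n → Set ℝ≥0) : Prop :=
  ∀ j, (X j).Nonempty ∧ (X j).OrdConnected

/-- A has X-simple image eigencone associated with λ. -/
def XSimple {n : ℕ} (A : Matrix (Fin n) (Fin n) ℝ≥0) (lam : ℝ≥0)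
    (X : Fin n → Set ℝ≥0) : Prop :=
  ∀ x ∈ eigencone A lam ∩ box X,
    ∀ y ∈ box X, mulVec A y = (fun i => lam * x i) → y = x

lemma gammaStar_spec {m n : ℕ} (A : Matrix (Fin m) (Fin n) ℝ≥0) (b : Fin m → ℝ≥0)
    (j : Fin n) (i : Fin m) : gammaStar A b j * (A i j : ℝ≥0∞) ≤ (b i : ℝ≥0∞) := by
  rw [gammaStar, sSup_eq_iSup', ENNReal.iSup_mul]
  exact iSup_le fun α => α.2 i

/-- existence of a solution of A⊗x = b in an interval X. -/
theorem stmt14 {m n : ℕ} (A : Matrix (Fin m) (Fin n) ℝ≥0) (b : Fin m → ℝ≥0)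
    (X : Fin n → Set ℝ≥0) (hX : IsInterval X) :
    (∃ x ∈ box X, mulVec A x = b) ↔
      ((∀ j : Fin n, ∃ s ∈ X j, (s : ℝ≥0∞) ≤ gammaStar A b j) ∧
       (∀ i : Fin m, b i ≠ 0 →
          ∃ j : Fin n, i ∈ Mset A b j ∧ ∃ t ∈ X j, gammaStar A b j = (t : ℝ≥0∞))) := by
  classical
  constructor
  · rintro ⟨x, hx, hAx⟩
    have hb : ∀ i, b i = Finset.univ.sup fun j => A i j * x j :=
      fun i => (congrFun hAx i).symm
    have hle : ∀ j, (x j : ℝ≥0∞) ≤ gammaStar A b j := by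
      intro j
      apply le_sSup
      intro i
      rw [← ENNReal.coe_mul, ENNReal.coe_le_coe, mul_comm, hb i]
      exact Finset.le_sup (f := fun j => A i j * x j) (Finset.mem_univ j)
    refine ⟨fun j => ⟨x j, hx j, hle j⟩, ?_⟩
    intro i hbi
    have hne : (Finset.univ : Finset (Fin n)).Nonempty := by
      by_contra h
      rw [Finset.not_nonempty_iff_eq_empty] at h
      apply hbi
      rw [hb i, h, Finset.sup_empty]
      rfl
    obtain ⟨j, -, hj⟩ := Finset.exists_mem_eq_sup Finset.univ hne fun j => A i j * x j
    have hji : A i j * x j = b i := by rw [hb i, hj]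
    have hA0 : (A i j : ℝ≥0∞) ≠ 0 := by
      simp only [ne_eq, ENNReal.coe_eq_zero]
      intro h; apply hbi; rw [← hji, h, zero_mul]
    have hge : gammaStar A b j ≤ (x j : ℝ≥0∞) := by
      have h1 := gammaStar_spec A b j i
      rw [← hji, ENNReal.coe_mul, mul_comm (A i j : ℝ≥0∞)] at h1
      exact (ENNReal.mul_le_mul_iff_left hA0 ENNReal.coe_ne_top).mp h1
    have heq : gammaStar A b j = (x j : ℝ≥0∞) := le_antisymm hge (hle j)
    refine ⟨j, ⟨?_, hbi⟩, x j, hx j, heq⟩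
    rw [heq, ← ENNReal.coe_mul, hji]
  · rintro ⟨ha, hb2⟩
    choose s hsX hsle using ha
    set P : Fin n → Prop := fun j => ∃ t ∈ X j, gammaStar A b j = (t : ℝ≥0∞) with hP
    set x : Fin n → ℝ≥0 := fun j => if h : P j then h.choose else s j with hxdef
    have hxX : ∀ j, x j ∈ X j := by
      intro j
      by_cases h : P j
      · rw [hxdef]; simp only [dif_pos h]; exact h.choose_spec.1
      · rw [hxdef]; simp only [dif_neg h]; exact hsX j
    have hxle : ∀ j, (x j : ℝ≥0∞) ≤ gammaStar A b j := by
      intro j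
      by_cases h : P j
      · rw [hxdef]; simp only [dif_pos h]; exact le_of_eq h.choose_spec.2.symm
      · rw [hxdef]; simp only [dif_neg h]; exact hsle j
    have hub : ∀ i j, A i j * x j ≤ b i := by
      intro i j
      rw [← ENNReal.coe_le_coe, ENNReal.coe_mul, mul_comm]
      exact le_trans (mul_le_mul_left (hxle j) _) (gammaStar_spec A b j i)
    refine ⟨x, hxX, ?_⟩
    funext i
    apply le_antisymm (Finset.sup_le fun j _ => hub i j)
    by_cases hbi : b i = 0
    · rw [hbi]; exact zero_le
    · obtain ⟨j, ⟨hjM, -⟩, t, htX, hγt⟩ := hb2 i hbi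
      have hPj : P j := ⟨t, htX, hγt⟩
      have hxj : x j = t := by
        rw [hxdef]; simp only [dif_pos hPj]
        have h2 := hγt.symm.trans hPj.choose_spec.2
        exact_mod_cast h2.symm
      have : A i j * x j = b i := by
        rw [hxj]
        have : (A i j : ℝ≥0∞) * (t : ℝ≥0∞) = (b i : ℝ≥0∞) := by rw [← hγt]; exact hjM
        exact_mod_cast this
      calc b i = A i j * x j := this.symm
        _ ≤ _ := Finset.le_sup (f := fun j => A i j * x j) (Finset.mem_univ j)

end MaxAlg

end
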